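/- Let V be the complex vector space with basis {e_c : c ∈ 𝔽₂⁴}, writing c = (c₁,c₂,c₃,c₄). Define linear maps on V by: T₁₁(e_c) = e_{(c₁,c₂,c₃,c₄+c₂+c₃)}; T₁₂(e_c) = (−1)^{c₁(c₂+c₃)} e_{(c₁,c₂+c₁,c₃+c₁,c₄)}; T₂₁(e_c) = e_{(c₁,c₃,c₂,c₄)}; T₂₂(e_c) = e_{(c₁,c₂,c₃,c₄+c₁)}; T₃₁(e_c) = (1/2)(e_{(c₁,c₂,c₃,c₄)} + e_{(c₁,c₂,c₃,c₄+1)}) + (1/2)(−1)^{c₂+c₃}(e_{(c₁,c₂+1,c₃+1,c₄)} − e_{(c₁,c₂+1,c₃+1,c₄+1)}); T₃₂(e_c) = (−1)^{c₁(c₂+c₃)} e_c (all index arithmetic in 𝔽₂). Then each of the six maps T_{ar} squares to the identity and any two of them commute; hence they generate a linear (not merely projective) representation of (ℤ/2ℤ)⁶ on V, so the associated 2-cocycle is trivial. -/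

import Mathlib

/-- `(-1)^x` for `x ∈ 𝔽₂`, as a complex number. -/
def sgnZ2 (x : ZMod 2) : ℂ := if x = 1 then -1 else 1

/-- Index set `𝔽₂⁴` for the basis `e_c` of the defect representation `Ω₀` (for `m = 3`). -/
abbrev BWIdx := Fin 4 → ZMod 2

/-- `T₁₁ : e_c ↦ e_{(c₁, c₂, c₃, c₄ + c₂ + c₃)}`. -/
noncomputable def T11 : Matrix BWIdx BWIdx ℂ :=
  Matrix.of fun c d => if d = ![c 0, c 1, c 2, c 3 + c 1 + c 2] then 1 else 0

/-- `T₁₂ : e_c ↦ (-1)^{c₁(c₂+c₃)} e_{(c₁, c₂ + c₁, c₃ + c₁, c₄)}`. -/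
noncomputable def T12 : Matrix BWIdx BWIdx ℂ :=
  Matrix.of fun c d =>
    if d = ![c 0, c 1 + c 0, c 2 + c 0, c 3] then sgnZ2 (c 0 * (c 1 + c 2)) else 0

/-- `T₂₁ : e_c ↦ e_{(c₁, c₃, c₂, c₄)}`. -/
noncomputable def T21 : Matrix BWIdx BWIdx ℂ :=
  Matrix.of fun c d => if d = ![c 0, c 2, c 1, c 3] then 1 else 0

/-- `T₂₂ : e_c ↦ e_{(c₁, c₂, c₃, c₄ + c₁)}`. -/
noncomputable def T22 : Matrix BWIdx BWIdx ℂ :=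
  Matrix.of fun c d => if d = ![c 0, c 1, c 2, c 3 + c 0] then 1 else 0

/-- `T₃₁ : e_c ↦ ½(e_c + e_{(c₁,c₂,c₃,c₄+1)})
  + ½(-1)^{c₂+c₃}(e_{(c₁,c₂+1,c₃+1,c₄)} - e_{(c₁,c₂+1,c₃+1,c₄+1)})`. -/
noncomputable def T31 : Matrix BWIdx BWIdx ℂ :=
  Matrix.of fun c d =>
    (1 / 2) * ((if d = c then 1 else 0) + (if d = ![c 0, c 1, c 2, c 3 + 1] then 1 else 0)) +
      (1 / 2) * sgnZ2 (c 1 + c 2) *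
        ((if d = ![c 0, c 1 + 1, c 2 + 1, c 3] then 1 else 0) -
          (if d = ![c 0, c 1 + 1, c 2 + 1, c 3 + 1] then 1 else 0))

/-- `T₃₂ : e_c ↦ (-1)^{c₁(c₂+c₃)} e_c`. -/
noncomputable def T32 : Matrix BWIdx BWIdx ℂ :=
  Matrix.of fun c d => if d = c then sgnZ2 (c 0 * (c 1 + c 2)) else 0

/-- The six intertwiner matrices. -/
noncomputable def Tmats : Fin 6 → Matrix BWIdx BWIdx ℂ := ![T11, T12, T21, T22, T31, T32]

/-! ### Integer models of the six matrices -/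

/-- Integer version of `sgnZ2`. -/
def sgnZ (x : ZMod 2) : ℤ := if x = 1 then -1 else 1

def A11 : Matrix BWIdx BWIdx ℤ :=
  Matrix.of fun c d => if d = ![c 0, c 1, c 2, c 3 + c 1 + c 2] then 1 else 0
def A12 : Matrix BWIdx BWIdx ℤ :=
  Matrix.of fun c d =>
    if d = ![c 0, c 1 + c 0, c 2 + c 0, c 3] then sgnZ (c 0 * (c 1 + c 2)) else 0
def A21 : Matrix BWIdx BWIdx ℤ :=
  Matrix.of fun c d => if d = ![c 0, c 2, c 1, c 3] then 1 else 0
def A22 : Matrix BWIdx BWIdx ℤ :=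
  Matrix.of fun c d => if d = ![c 0, c 1, c 2, c 3 + c 0] then 1 else 0
def A31 : Matrix BWIdx BWIdx ℤ :=
  Matrix.of fun c d =>
    ((if d = c then 1 else 0) + (if d = ![c 0, c 1, c 2, c 3 + 1] then 1 else 0)) +
      sgnZ (c 1 + c 2) *
        ((if d = ![c 0, c 1 + 1, c 2 + 1, c 3] then 1 else 0) -
          (if d = ![c 0, c 1 + 1, c 2 + 1, c 3 + 1] then 1 else 0))
def A32 : Matrix BWIdx BWIdx ℤ :=
  Matrix.of fun c d => if d = c then sgnZ (c 0 * (c 1 + c 2)) else 0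

def AZ : Fin 6 → Matrix BWIdx BWIdx ℤ := ![A11, A12, A21, A22, A31, A32]

/-- Scalars relating `Tmats` to `AZ`. -/
noncomputable def sc : Fin 6 → ℂ := ![1, 1, 1, 1, (2 : ℂ)⁻¹, 1]

/-- Integer weights: `AZ k * AZ k = wt k • 1`. -/
def wt : Fin 6 → ℤ := ![1, 1, 1, 1, 4, 1]

/-- Entrywise integer-to-complex cast, as a ring hom on matrices. -/
noncomputable def F : Matrix BWIdx BWIdx ℤ →+* Matrix BWIdx BWIdx ℂ :=
  (Int.castRingHom ℂ).mapMatrix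

lemma sgn_cast (x : ZMod 2) : ((sgnZ x : ℤ) : ℂ) = sgnZ2 x := by
  unfold sgnZ sgnZ2; split <;> norm_num
lemma hT11 : T11 = F A11 := by
  ext c d
  simp [T11, A11, F, Matrix.map_apply, apply_ite (fun z : ℤ => (z : ℂ))]
lemma hT12 : T12 = F A12 := by
  ext c d
  simp [T12, A12, F, Matrix.map_apply, apply_ite (fun z : ℤ => (z : ℂ)), sgn_cast]
lemma hT21 : T21 = F A21 := by
  ext c d
  simp [T21, A21, F, Matrix.map_apply, apply_ite (fun z : ℤ => (z : ℂ))]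
lemma hT22 : T22 = F A22 := by
  ext c d
  simp [T22, A22, F, Matrix.map_apply, apply_ite (fun z : ℤ => (z : ℂ))]
lemma hT32 : T32 = F A32 := by
  ext c d
  simp [T32, A32, F, Matrix.map_apply, apply_ite (fun z : ℤ => (z : ℂ)), sgn_cast]
lemma hT31 : T31 = (2 : ℂ)⁻¹ • F A31 := by
  ext c d
  simp only [T31, A31, F, RingHom.mapMatrix_apply, Matrix.map_apply, Matrix.of_apply,
    Matrix.smul_apply, smul_eq_mul, Int.coe_castRingHom]
  push_cast [sgn_cast, apply_ite (fun z : ℤ => (z : ℂ))]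
  ring

lemma hT : ∀ k, Tmats k = sc k • F (AZ k) := by
  intro k
  fin_cases k
  · show T11 = (1 : ℂ) • F A11; rw [one_smul, hT11]
  · show T12 = (1 : ℂ) • F A12; rw [one_smul, hT12]
  · show T21 = (1 : ℂ) • F A21; rw [one_smul, hT21]
  · show T22 = (1 : ℂ) • F A22; rw [one_smul, hT22]
  · show T31 = (2 : ℂ)⁻¹ • F A31; exact hT31
  · show T32 = (1 : ℂ) • F A32; rw [one_smul, hT32]

example : ((4:ℤ) • (1 : Matrix BWIdx BWIdx ℂ)) = (4:ℂ) • 1 := by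
  rw [← Int.cast_smul_eq_zsmul ℂ]; norm_num

set_option maxHeartbeats 1600000 in
lemma sqA11 : A11 * A11 = 1 := by decide

set_option maxHeartbeats 1600000 in
lemma sqA12 : A12 * A12 = 1 := by decide

set_option maxHeartbeats 1600000 in
lemma sqA21 : A21 * A21 = 1 := by decide

set_option maxHeartbeats 1600000 in
lemma sqA22 : A22 * A22 = 1 := by decide

set_option maxHeartbeats 1600000 in
lemma sqA31 : A31 * A31 = (4 : ℤ) • 1 := by decide

set_option maxHeartbeats 1600000 in
lemma sqA32 : A32 * A32 = 1 := by decide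

set_option maxHeartbeats 1600000 in
lemma comm_01 : A11 * A12 = A12 * A11 := by decide

set_option maxHeartbeats 1600000 in
lemma comm_02 : A11 * A21 = A21 * A11 := by decide

set_option maxHeartbeats 1600000 in
lemma comm_03 : A11 * A22 = A22 * A11 := by decide

set_option maxHeartbeats 1600000 in
lemma comm_04 : A11 * A31 = A31 * A11 := by decide

set_option maxHeartbeats 1600000 in
lemma comm_05 : A11 * A32 = A32 * A11 := by decide

set_option maxHeartbeats 1600000 in
lemma comm_12 : A12 * A21 = A21 * A12 := by decide

set_option maxHeartbeats 1600000 in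
lemma comm_13 : A12 * A22 = A22 * A12 := by decide

set_option maxHeartbeats 1600000 in
lemma comm_14 : A12 * A31 = A31 * A12 := by decide

set_option maxHeartbeats 1600000 in
lemma comm_15 : A12 * A32 = A32 * A12 := by decide

set_option maxHeartbeats 1600000 in
lemma comm_23 : A21 * A22 = A22 * A21 := by decide

set_option maxHeartbeats 1600000 in
lemma comm_24 : A21 * A31 = A31 * A21 := by decide

set_option maxHeartbeats 1600000 in
lemma comm_25 : A21 * A32 = A32 * A21 := by decide

set_option maxHeartbeats 1600000 in
lemma comm_34 : A22 * A31 = A31 * A22 := by decide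

set_option maxHeartbeats 1600000 in
lemma comm_35 : A22 * A32 = A32 * A22 := by decide

set_option maxHeartbeats 1600000 in
lemma comm_45 : A31 * A32 = A32 * A31 := by decide

lemma AZ_sq : ∀ k, AZ k * AZ k = wt k • 1 := by
  intro k; fin_cases k
  · show A11 * A11 = (1 : ℤ) • 1; rw [one_smul]; exact sqA11
  · show A12 * A12 = (1 : ℤ) • 1; rw [one_smul]; exact sqA12
  · show A21 * A21 = (1 : ℤ) • 1; rw [one_smul]; exact sqA21
  · show A22 * A22 = (1 : ℤ) • 1; rw [one_smul]; exact sqA22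
  · show A31 * A31 = (4 : ℤ) • 1; exact sqA31
  · show A32 * A32 = (1 : ℤ) • 1; rw [one_smul]; exact sqA32

lemma AZ_comm : ∀ k l : Fin 6, AZ k * AZ l = AZ l * AZ k := by
  intro k l; fin_cases k <;> fin_cases l
  exacts [rfl, comm_01, comm_02, comm_03, comm_04, comm_05, comm_01.symm, rfl, comm_12, comm_13, comm_14, comm_15, comm_02.symm, comm_12.symm, rfl, comm_23, comm_24, comm_25, comm_03.symm, comm_13.symm, comm_23.symm, rfl, comm_34, comm_35, comm_04.symm, comm_14.symm, comm_24.symm, comm_34.symm, rfl, comm_45, comm_05.symm, comm_15.symm, comm_25.symm, comm_35.symm, comm_45.symm, rfl]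

lemma Tmul (k l : Fin 6) : Tmats k * Tmats l = (sc k * sc l) • F (AZ k * AZ l) := by
  rw [hT k, hT l, smul_mul_assoc, mul_smul_comm, smul_smul, map_mul]

lemma Tsq (k : Fin 6) : Tmats k * Tmats k = 1 := by
  rw [Tmul, AZ_sq k, map_zsmul, map_one, ← Int.cast_smul_eq_zsmul ℂ, smul_smul]
  fin_cases k
  · show ((1:ℂ) * 1 * ((1:ℤ):ℂ)) • (1 : Matrix BWIdx BWIdx ℂ) = 1; norm_num
  · show ((1:ℂ) * 1 * ((1:ℤ):ℂ)) • (1 : Matrix BWIdx BWIdx ℂ) = 1; norm_num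
  · show ((1:ℂ) * 1 * ((1:ℤ):ℂ)) • (1 : Matrix BWIdx BWIdx ℂ) = 1; norm_num
  · show ((1:ℂ) * 1 * ((1:ℤ):ℂ)) • (1 : Matrix BWIdx BWIdx ℂ) = 1; norm_num
  · show ((2:ℂ)⁻¹ * 2⁻¹ * ((4:ℤ):ℂ)) • (1 : Matrix BWIdx BWIdx ℂ) = 1; norm_num
  · show ((1:ℂ) * 1 * ((1:ℤ):ℂ)) • (1 : Matrix BWIdx BWIdx ℂ) = 1; norm_num

lemma Tcomm (k l : Fin 6) : Tmats k * Tmats l = Tmats l * Tmats k := by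
  rw [Tmul, Tmul, AZ_comm k l, mul_comm (sc k)]

/-- The order-two homomorphism generated by an involution. -/
def involHom {M : Type*} [Monoid M] (T : M) (h : T * T = 1) :
    Multiplicative (ZMod 2) →* M where
  toFun b := if Multiplicative.toAdd b = 1 then T else 1
  map_one' := by simp
  map_mul' a b := by
    have key : ∀ x : ZMod 2, x = 0 ∨ x = 1 := by decide
    rcases key (Multiplicative.toAdd a) with h1 | h1 <;>
      rcases key (Multiplicative.toAdd b) with h2 | h2 <;>
      simp [toAdd_mul, h1, h2, h, show (1 + 1 : ZMod 2) = 0 by decide]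

lemma psi_commute : Pairwise fun k l : Fin 6 =>
    ∀ x y, Commute ((involHom (Tmats k) (Tsq k)) x) ((involHom (Tmats l) (Tsq l)) y) := by
  intro k l _ x y
  simp only [involHom, MonoidHom.coe_mk, OneHom.coe_mk]
  split <;> split <;>
    first
      | exact Commute.one_left _
      | exact Commute.one_right _
      | exact Tcomm k l

/-- The six intertwiner matrices `T_{ar}` for `m = 3` square to the identity and pairwise
commute; hence they generate a linear (not merely projective) representation of `(ℤ/2ℤ)⁶`,
so the associated 2-cocycle is trivial. -/
theorem m3_intertwiners_linear_rep :
    (∀ k : Fin 6, Tmats k * Tmats k = 1) ∧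
    (∀ k l : Fin 6, Tmats k * Tmats l = Tmats l * Tmats k) ∧
    ∃ φ : (Fin 6 → ZMod 2) → Matrix BWIdx BWIdx ℂ,
      φ 0 = 1 ∧ (∀ x y, φ (x + y) = φ x * φ y) ∧
      ∀ k : Fin 6, φ (Pi.single k 1) = Tmats k := by
  refine ⟨Tsq, Tcomm, ?_⟩
  set Φ := MonoidHom.noncommPiCoprod (fun k => involHom (Tmats k) (Tsq k)) psi_commute with hΦ
  refine ⟨fun x => Φ (fun k => Multiplicative.ofAdd (x k)), ?_, ?_, ?_⟩
  · exact map_one Φ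
  · intro x y
    have : (fun k => Multiplicative.ofAdd ((x + y) k)) =
        (fun k => Multiplicative.ofAdd (x k)) * (fun k => Multiplicative.ofAdd (y k)) := rfl
    show Φ _ = Φ _ * Φ _
    rw [this, map_mul]
  · intro k
    have h1 : (fun j : Fin 6 => Multiplicative.ofAdd ((Pi.single k 1 : Fin 6 → ZMod 2) j)) =
        Pi.mulSingle (M := fun _ : Fin 6 => Multiplicative (ZMod 2)) k
          (Multiplicative.ofAdd (1 : ZMod 2)) := by
      funext j
      by_cases hj : j = k
      · subst hj; simp
      · simp [Pi.single_eq_of_ne hj, Pi.mulSingle_eq_of_ne hj]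
    show Φ _ = Tmats k
    have h2 := MonoidHom.noncommPiCoprod_mulSingle
      (N := fun _ : Fin 6 => Multiplicative (ZMod 2))
      (ϕ := fun k => involHom (Tmats k) (Tsq k)) (hcomm := psi_commute) k
      (Multiplicative.ofAdd (1 : ZMod 2))
    rw [h1, hΦ, h2]
    simp [involHom]
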